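/- For a quantum Lie algebra, the elements Z_r defined by Z_2 = C_1 and Z_{r+1} = C_r + σ_r Z_r δ_{r+1} satisfy σ_m Z_r = Z_r σ_m for all m ≤ r-2, and have the explicit form Z_{r+1} = C_r + σ_r C_{r-1} δ_{r+1} + σ_r σ_{r-1} C_{r-2} δ_r δ_{r+1} + ... + σ_r σ_{r-1}···σ_2 C_1 δ_3···δ_{r+1}. -/

import Mathlib

section QuantumLie

variable {K : Type*} [CommRing K] {N : ℕ}

/-- Matrix of `σ` acting at (0-based) positions `n, n+1` of `V^{⊗t}` (identity on the
other factors); `σm` is the matrix of `σ : V ⊗ V → V ⊗ V`. -/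
def qlSigma (σm : Matrix (Fin N × Fin N) (Fin N × Fin N) K) (t n : ℕ) :
    Matrix (Fin t → Fin N) (Fin t → Fin N) K := fun x y =>
  if h : n + 1 < t then
    σm (x ⟨n, by omega⟩, x ⟨n + 1, h⟩) (y ⟨n, by omega⟩, y ⟨n + 1, h⟩) *
      ∏ i : Fin t, (if (i : ℕ) = n ∨ (i : ℕ) = n + 1 then 1
        else if x i = y i then (1 : K) else 0)
  else 0

/-- Matrix of `C : V ⊗ V → V` applied to the (0-based) factors `n, n+1` of `V^{⊗(t+1)}`
(identity on the other factors), a map `V^{⊗(t+1)} → V^{⊗t}`;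
`Cc i j a = C^a_{ij}` are the structure constants. -/
def qlC (Cc : Fin N → Fin N → Fin N → K) (t n : ℕ) :
    Matrix (Fin t → Fin N) (Fin (t + 1) → Fin N) K := fun x y =>
  if h : n < t then
    Cc (y ⟨n, by omega⟩) (y ⟨n + 1, by omega⟩) (x ⟨n, h⟩) *
      ∏ i : Fin t, (if (i : ℕ) = n then 1
        else if x i = y (if (i : ℕ) < n then i.castSucc else i.succ) then (1 : K) else 0)
  else 0

/-- Extension of an operator `V^{⊗b} → V^{⊗a}` by the identity on one extra trailing
tensor factor. -/
def qlExt {a b : ℕ} (M : Matrix (Fin a → Fin N) (Fin b → Fin N) K) :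
    Matrix (Fin (a + 1) → Fin N) (Fin (b + 1) → Fin N) K := fun x y =>
  (if x (Fin.last a) = y (Fin.last b) then (1 : K) else 0) *
    M (fun i => x i.castSucc) (fun j => y j.castSucc)

/-- The operators `Z_r : V^{⊗r} → V^{⊗(r-1)}` of a quantum Lie algebra, defined by
`Z_2 = C_1` and `Z_{r+1} = C_r + σ_r Z_r δ_{r+1}` (here `qlZ σm Cc k = Z_{k+2}`;
operator words are read left to right, so `σ_r Z_r δ_{r+1}` has matrix
`qlExt (Z_r) * Mat(σ_r)`). -/
def qlZ (σm : Matrix (Fin N × Fin N) (Fin N × Fin N) K)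
    (Cc : Fin N → Fin N → Fin N → K) :
    (k : ℕ) → Matrix (Fin (k + 1) → Fin N) (Fin (k + 2) → Fin N) K
  | 0 => qlC Cc 1 0
  | k + 1 => qlC Cc (k + 2) (k + 1) + qlExt (qlZ σm Cc k) * qlSigma σm (k + 3) (k + 1)

end QuantumLie

namespace QLAux

set_option linter.unusedSectionVars false


variable {K : Type*} [CommRing K] {N : ℕ}

lemma prod_delta {t : ℕ} (x y : Fin t → Fin N) :
    (∏ i : Fin t, (if x i = y i then (1 : K) else 0)) = if x = y then 1 else 0 := by
  by_cases h : x = y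
  · simp [h]
  · rw [if_neg h]
    obtain ⟨i, hi⟩ := Function.ne_iff.mp h
    exact Finset.prod_eq_zero (Finset.mem_univ i) (if_neg hi)

def splitEquiv (u c N : ℕ) : ((Fin u → Fin N) × (Fin c → Fin N)) ≃ (Fin (u + c) → Fin N) where
  toFun p := fun i => if h : (i : ℕ) < u then p.1 ⟨i, h⟩ else p.2 ⟨(i : ℕ) - u, by omega⟩
  invFun y := (fun i => y ⟨i, by omega⟩, fun i => y ⟨u + i, by omega⟩)
  left_inv p := by
    refine Prod.ext ?_ ?_
    · funext i
      simp only [dif_pos i.isLt, Fin.eta]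
    · funext i
      have h2 : ¬ (u + (i : ℕ) < u) := by omega
      simp only [dif_neg h2, Nat.add_sub_cancel_left, Fin.eta]
  right_inv y := by
    funext i
    by_cases h : (i : ℕ) < u
    · exact (dif_pos h).trans (congrArg y (Fin.ext rfl))
    · exact (dif_neg h).trans
        (congrArg y (Fin.ext (show u + ((i : ℕ) - u) = (i : ℕ) by omega)))

lemma splitEquiv_low {u c N : ℕ} (p : (Fin u → Fin N) × (Fin c → Fin N)) (i : ℕ)
    (h : i < u) (h' : i < u + c) :
    splitEquiv u c N p ⟨i, h'⟩ = p.1 ⟨i, h⟩ := by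
  simp [splitEquiv, h]

lemma splitEquiv_high {u c N : ℕ} (p : (Fin u → Fin N) × (Fin c → Fin N)) (i : ℕ)
    (h : i < c) (h' : u + i < u + c) :
    splitEquiv u c N p ⟨u + i, h'⟩ = p.2 ⟨i, h⟩ := by
  have h2 : ¬ (u + i < u) := by omega
  simp only [splitEquiv, Equiv.coe_fn_mk, dif_neg h2]
  exact congrArg p.2 (Fin.ext (by simp))

/-- tensor product of operators on tensor powers -/
def tmul {u v c d : ℕ} (A : Matrix (Fin u → Fin N) (Fin v → Fin N) K)
    (B : Matrix (Fin c → Fin N) (Fin d → Fin N) K) :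
    Matrix (Fin (u + c) → Fin N) (Fin (v + d) → Fin N) K := fun x y =>
  A (fun i => x ⟨i, by omega⟩) (fun i => y ⟨i, by omega⟩) *
    B (fun i => x ⟨u + i, by omega⟩) (fun i => y ⟨v + i, by omega⟩)

lemma tmul_mul {u v w c d e : ℕ} (A : Matrix (Fin u → Fin N) (Fin v → Fin N) K)
    (B : Matrix (Fin c → Fin N) (Fin d → Fin N) K)
    (A' : Matrix (Fin v → Fin N) (Fin w → Fin N) K)
    (B' : Matrix (Fin d → Fin N) (Fin e → Fin N) K) :
    tmul A B * tmul A' B' = tmul (A * A') (B * B') := by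
  ext x z
  rw [Matrix.mul_apply]
  have key := Fintype.sum_equiv (splitEquiv v d N)
    (fun p => tmul A B x (splitEquiv v d N p) * tmul A' B' (splitEquiv v d N p) z)
    (fun y => tmul A B x y * tmul A' B' y z) (fun p => rfl)
  rw [← key, Fintype.sum_prod_type]
  have hl : ∀ (y1 : Fin v → Fin N) (y2 : Fin d → Fin N),
      (fun i : Fin v => splitEquiv v d N (y1, y2) ⟨(i : ℕ), by omega⟩) = y1 := by
    intro y1 y2; funext i; rw [splitEquiv_low (y1, y2) i i.isLt]
  have hh : ∀ (y1 : Fin v → Fin N) (y2 : Fin d → Fin N),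
      (fun i : Fin d => splitEquiv v d N (y1, y2) ⟨v + (i : ℕ), by omega⟩) = y2 := by
    intro y1 y2; funext i; rw [splitEquiv_high (y1, y2) i i.isLt]
  simp only [tmul, Matrix.mul_apply, Finset.sum_mul_sum]
  refine Finset.sum_congr rfl fun y1 _ => ?_
  refine Finset.sum_congr rfl fun y2 _ => ?_
  rw [hl y1 y2, hh y1 y2]
  ring

lemma tmul_one_one {u c : ℕ} :
    tmul (1 : Matrix (Fin u → Fin N) (Fin u → Fin N) K)
      (1 : Matrix (Fin c → Fin N) (Fin c → Fin N) K) = 1 := by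
  ext x y
  simp only [tmul, Matrix.one_apply]
  by_cases h : x = y
  · simp [h]
  · obtain ⟨i, hi⟩ := Function.ne_iff.mp h
    by_cases hl : (i : ℕ) < u
    · have : ¬ (fun i : Fin u => x ⟨i, by omega⟩) = (fun i : Fin u => y ⟨i, by omega⟩) := by
        intro hc
        exact hi (by simpa using congrFun hc ⟨i, hl⟩)
      simp [h, this]
    · have : ¬ (fun i : Fin c => x ⟨u + i, by omega⟩) = (fun i : Fin c => y ⟨u + i, by omega⟩) := by
        intro hc
        have h3 := congrFun hc ⟨(i : ℕ) - u, by omega⟩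
        simp only at h3
        have hh : (⟨u + ((i : ℕ) - u), by omega⟩ : Fin (u + c)) = i :=
          Fin.ext (show u + ((i : ℕ) - u) = (i : ℕ) by omega)
        rw [hh] at h3
        exact hi h3
      simp [h, this]

lemma tmul_add {u v c d : ℕ} (A : Matrix (Fin u → Fin N) (Fin v → Fin N) K)
    (B B' : Matrix (Fin c → Fin N) (Fin d → Fin N) K) :
    tmul A (B + B') = tmul A B + tmul A B' := by
  ext x y
  simp [tmul, mul_add]





-- (1)
lemma qlExt_eq_tmul {a b : ℕ} (M : Matrix (Fin a → Fin N) (Fin b → Fin N) K) :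
    qlExt M = tmul M (1 : Matrix (Fin 1 → Fin N) (Fin 1 → Fin N) K) := by
  ext x y
  simp only [qlExt, tmul, Matrix.one_apply]
  rw [mul_comm]
  congr 1
  · congr 1
    refine propext ⟨fun h => ?_, fun h => ?_⟩
    · funext i
      have e1 : (⟨a + (i : ℕ), by omega⟩ : Fin (a + 1)) = Fin.last a :=
        Fin.ext (show a + (i : ℕ) = a by omega)
      have e2 : (⟨b + (i : ℕ), by omega⟩ : Fin (b + 1)) = Fin.last b :=
        Fin.ext (show b + (i : ℕ) = b by omega)
      rw [e1, e2, h]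
    · have h3 := congrFun h 0
      have e1 : (⟨a + ((0 : Fin 1) : ℕ), by omega⟩ : Fin (a + 1)) = Fin.last a :=
        Fin.ext (show a + ((0 : Fin 1) : ℕ) = a by simp)
      have e2 : (⟨b + ((0 : Fin 1) : ℕ), by omega⟩ : Fin (b + 1)) = Fin.last b :=
        Fin.ext (show b + ((0 : Fin 1) : ℕ) = b by simp)
      rw [e1, e2] at h3
      exact h3

-- (2)
lemma tmul_one_sigma (σm : Matrix (Fin N × Fin N) (Fin N × Fin N) K) {p w n : ℕ}
    (h : n + 1 < w) :
    tmul (1 : Matrix (Fin p → Fin N) (Fin p → Fin N) K) (qlSigma σm w n) =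
      qlSigma σm (p + w) (p + n) := by
  ext x y
  have h' : p + n + 1 < p + w := by omega
  simp only [tmul, qlSigma, dif_pos h, dif_pos h', Matrix.one_apply]
  rw [mul_left_comm]
  congr 1
  rw [← prod_delta (fun i : Fin p => x ⟨i, by omega⟩) (fun i : Fin p => y ⟨i, by omega⟩)]
  rw [Fin.prod_univ_add
    (fun i : Fin (p + w) => if (i : ℕ) = p + n ∨ (i : ℕ) = p + n + 1 then 1
      else if x i = y i then (1 : K) else 0)]
  congr 1
  · refine Finset.prod_congr rfl fun i _ => ?_
    have : ¬ (((Fin.castAdd w i : Fin (p + w)) : ℕ) = p + n ∨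
        ((Fin.castAdd w i : Fin (p + w)) : ℕ) = p + n + 1) := by
      simp only [Fin.coe_castAdd]; omega
    rw [if_neg this]
    rfl
  · refine Finset.prod_congr rfl fun i _ => ?_
    have : (((Fin.natAdd p i : Fin (p + w)) : ℕ) = p + n ∨
        ((Fin.natAdd p i : Fin (p + w)) : ℕ) = p + n + 1) ↔ ((i : ℕ) = n ∨ (i : ℕ) = n + 1) := by
      simp only [Fin.coe_natAdd]; omega
    rw [if_congr this rfl rfl]
    rfl

-- (3)
lemma sigma_tmul_one (σm : Matrix (Fin N × Fin N) (Fin N × Fin N) K) {w c n : ℕ}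
    (h : n + 1 < w) :
    tmul (qlSigma σm w n) (1 : Matrix (Fin c → Fin N) (Fin c → Fin N) K) =
      qlSigma σm (w + c) n := by
  ext x y
  have h' : n + 1 < w + c := by omega
  simp only [tmul, qlSigma, dif_pos h, dif_pos h', Matrix.one_apply]
  rw [mul_assoc]
  congr 1
  rw [← prod_delta (fun i : Fin c => x ⟨w + i, by omega⟩) (fun i : Fin c => y ⟨w + i, by omega⟩)]
  rw [Fin.prod_univ_add
    (fun i : Fin (w + c) => if (i : ℕ) = n ∨ (i : ℕ) = n + 1 then 1
      else if x i = y i then (1 : K) else 0)]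
  congr 1
  refine Finset.prod_congr rfl fun i _ => ?_
  have : ¬ (((Fin.natAdd w i : Fin (w + c)) : ℕ) = n ∨
      ((Fin.natAdd w i : Fin (w + c)) : ℕ) = n + 1) := by
    simp only [Fin.coe_natAdd]; omega
  rw [if_neg this]
  rfl

-- (4)
lemma tmul_one_C (Cc : Fin N → Fin N → Fin N → K) {p w n : ℕ} (h : n < w) :
    tmul (1 : Matrix (Fin p → Fin N) (Fin p → Fin N) K) (qlC Cc w n) =
      qlC Cc (p + w) (p + n) := by
  ext x y
  have h' : p + n < p + w := by omega
  simp only [tmul, qlC, dif_pos h, dif_pos h', Matrix.one_apply]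
  rw [mul_left_comm]
  congr 1
  rw [← prod_delta (fun i : Fin p => x ⟨i, by omega⟩) (fun i : Fin p => y ⟨i, by omega⟩)]
  rw [Fin.prod_univ_add
    (fun i : Fin (p + w) => if (i : ℕ) = p + n then 1
      else if x i = y (if (i : ℕ) < p + n then i.castSucc else i.succ) then (1 : K) else 0)]
  congr 1
  · refine Finset.prod_congr rfl fun i _ => ?_
    have h1 : ¬ (((Fin.castAdd w i : Fin (p + w)) : ℕ) = p + n) := by
      simp only [Fin.coe_castAdd]; omega
    have h2 : ((Fin.castAdd w i : Fin (p + w)) : ℕ) < p + n := by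
      simp only [Fin.coe_castAdd]; omega
    rw [if_neg h1, if_pos h2]
    rfl
  · refine Finset.prod_congr rfl fun i _ => ?_
    have hc : (((Fin.natAdd p i : Fin (p + w)) : ℕ) = p + n) ↔ ((i : ℕ) = n) := by
      simp only [Fin.coe_natAdd]; omega
    rw [if_congr hc rfl rfl]
    by_cases hi : (i : ℕ) = n
    · rw [if_pos hi, if_pos hi]
    · rw [if_neg hi, if_neg hi]
      by_cases hlt : (i : ℕ) < n
      · have hlt' : ((Fin.natAdd p i : Fin (p + w)) : ℕ) < p + n := by
          simp only [Fin.coe_natAdd]; omega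
        rw [if_pos hlt, if_pos hlt']
        rfl
      · have hlt' : ¬ ((Fin.natAdd p i : Fin (p + w)) : ℕ) < p + n := by
          simp only [Fin.coe_natAdd]; omega
        rw [if_neg hlt, if_neg hlt']
        rfl

-- (5)
lemma qlExt_qlC (Cc : Fin N → Fin N → Fin N → K) {t n : ℕ} (h : n < t) :
    qlExt (qlC Cc t n) = qlC Cc (t + 1) n := by
  ext x y
  have h' : n < t + 1 := by omega
  simp only [qlExt, qlC, dif_pos h, dif_pos h']
  rw [mul_left_comm]
  congr 1
  rw [Fin.prod_univ_castSucc
    (fun i : Fin (t + 1) => if (i : ℕ) = n then 1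
      else if x i = y (if (i : ℕ) < n then i.castSucc else i.succ) then (1 : K) else 0)]
  rw [mul_comm]
  congr 1
  · refine Finset.prod_congr rfl fun i _ => ?_
    have hc : (((i.castSucc : Fin (t + 1)) : ℕ) = n) ↔ ((i : ℕ) = n) := by
      simp
    rw [if_congr hc rfl rfl]
    by_cases hi : (i : ℕ) = n
    · rw [if_pos hi, if_pos hi]
    · rw [if_neg hi, if_neg hi]
      by_cases hlt : (i : ℕ) < n
      · have hlt' : ((i.castSucc : Fin (t + 1)) : ℕ) < n := by simpa using hlt
        rw [if_pos hlt, if_pos hlt']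
      · have hlt' : ¬ ((i.castSucc : Fin (t + 1)) : ℕ) < n := by simpa using hlt
        rw [if_neg hlt, if_neg hlt']
        congr 1
  · -- last factor
    have h1 : ¬ ((Fin.last t : Fin (t + 1)) : ℕ) = n := by simp [Fin.last]; omega
    have h2 : ¬ ((Fin.last t : Fin (t + 1)) : ℕ) < n := by simp [Fin.last]; omega
    rw [if_neg h1, if_neg h2]
    rfl

-- (6)
lemma tmul_tmul_one {a b : ℕ} (M : Matrix (Fin a → Fin N) (Fin b → Fin N) K) :
    tmul (tmul M (1 : Matrix (Fin 1 → Fin N) (Fin 1 → Fin N) K))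
        (1 : Matrix (Fin 1 → Fin N) (Fin 1 → Fin N) K) =
      tmul M (1 : Matrix (Fin 2 → Fin N) (Fin 2 → Fin N) K) := by
  ext x y
  simp only [tmul, Matrix.one_apply]
  rw [mul_assoc]
  congr 1
  have c1 : ((fun i : Fin 1 => x ⟨a + (i : ℕ), by omega⟩) =
      fun i : Fin 1 => y ⟨b + (i : ℕ), by omega⟩) ↔
      (x ⟨a, by omega⟩ : Fin N) = y ⟨b, by omega⟩ := by
    constructor
    · intro hq; simpa using congrFun hq 0
    · intro hq; funext i
      have : i = 0 := Subsingleton.elim i 0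
      subst this; simpa using hq
  have c2 : ((fun i : Fin 1 => x ⟨a + 1 + (i : ℕ), by omega⟩) =
      fun i : Fin 1 => y ⟨b + 1 + (i : ℕ), by omega⟩) ↔
      (x ⟨a + 1, by omega⟩ : Fin N) = y ⟨b + 1, by omega⟩ := by
    constructor
    · intro hq; simpa using congrFun hq 0
    · intro hq; funext i
      have : i = 0 := Subsingleton.elim i 0
      subst this; simpa using hq
  have c3 : ((fun i : Fin 2 => x ⟨a + (i : ℕ), by omega⟩) =
      fun i : Fin 2 => y ⟨b + (i : ℕ), by omega⟩) ↔
      (((x ⟨a, by omega⟩ : Fin N) = y ⟨b, by omega⟩) ∧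
        ((x ⟨a + 1, by omega⟩ : Fin N) = y ⟨b + 1, by omega⟩)) := by
    constructor
    · intro hq
      exact ⟨by simpa using congrFun hq 0, by simpa using congrFun hq 1⟩
    · intro hq; funext i
      fin_cases i
      · simpa using hq.1
      · simpa using hq.2
  rw [if_congr c1 rfl rfl, if_congr c2 rfl rfl, if_congr c3 rfl rfl]
  by_cases h1 : (x ⟨a, by omega⟩ : Fin N) = y ⟨b, by omega⟩ <;>
    by_cases h2 : (x ⟨a + 1, by omega⟩ : Fin N) = y ⟨b + 1, by omega⟩ <;>
    simp [h1, h2]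

-- qlExt algebra
lemma qlExt_mul {a b c : ℕ} (A : Matrix (Fin a → Fin N) (Fin b → Fin N) K)
    (B : Matrix (Fin b → Fin N) (Fin c → Fin N) K) :
    qlExt (A * B) = qlExt A * qlExt B := by
  rw [qlExt_eq_tmul, qlExt_eq_tmul, qlExt_eq_tmul, tmul_mul, Matrix.one_mul]

lemma qlExt_one {t : ℕ} : qlExt (1 : Matrix (Fin t → Fin N) (Fin t → Fin N) K) = 1 := by
  rw [qlExt_eq_tmul, tmul_one_one]

lemma qlExt_add {a b : ℕ} (A B : Matrix (Fin a → Fin N) (Fin b → Fin N) K) :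
    qlExt (A + B) = qlExt A + qlExt B := by
  ext x y
  simp [qlExt, mul_add]

lemma qlExt_sum {a b : ℕ} {ι : Type*} (s : Finset ι)
    (f : ι → Matrix (Fin a → Fin N) (Fin b → Fin N) K) :
    qlExt (∑ i ∈ s, f i) = ∑ i ∈ s, qlExt (f i) := by
  induction s using Finset.cons_induction with
  | empty => ext x y; simp [qlExt]
  | cons i s hi ih => rw [Finset.sum_cons, Finset.sum_cons, qlExt_add, ih]

lemma qlExt_listProd {t : ℕ} (l : List (Matrix (Fin t → Fin N) (Fin t → Fin N) K)) :
    qlExt l.prod = (l.map qlExt).prod := by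
  induction l with
  | nil => simpa using qlExt_one
  | cons a l ih => rw [List.prod_cons, qlExt_mul, ih, List.map_cons, List.prod_cons]

lemma qlExt_qlSigma (σm : Matrix (Fin N × Fin N) (Fin N × Fin N) K) {t n : ℕ}
    (h : n + 1 < t) :
    qlExt (qlSigma σm t n) = qlSigma σm (t + 1) n := by
  rw [qlExt_eq_tmul]
  exact sigma_tmul_one σm h


lemma tmul_one_mul {p a b c : ℕ} (X : Matrix (Fin a → Fin N) (Fin b → Fin N) K)
    (Y : Matrix (Fin b → Fin N) (Fin c → Fin N) K) :
    tmul (1 : Matrix (Fin p → Fin N) (Fin p → Fin N) K) (X * Y) =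
      tmul (1 : Matrix (Fin p → Fin N) (Fin p → Fin N) K) X *
        tmul (1 : Matrix (Fin p → Fin N) (Fin p → Fin N) K) Y := by
  rw [tmul_mul, Matrix.one_mul]

section Structural

variable (σm : Matrix (Fin N × Fin N) (Fin N × Fin N) K) (Cc : Fin N → Fin N → Fin N → K)

lemma C_hi_sigma_low (u w f a : ℕ) (ha : a + 1 < u) (hf : f < w) :
    qlC Cc (u + w) (u + f) * qlSigma σm (u + w + 1) a =
      qlSigma σm (u + w) a * qlC Cc (u + w) (u + f) := by
  have e1 : qlC Cc (u + w) (u + f) =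
      tmul (1 : Matrix (Fin u → Fin N) (Fin u → Fin N) K) (qlC Cc w f) :=
    (tmul_one_C Cc hf).symm
  have e2 : qlSigma σm (u + w + 1) a =
      tmul (qlSigma σm u a)
        (1 : Matrix (Fin (w + 1) → Fin N) (Fin (w + 1) → Fin N) K) :=
    (sigma_tmul_one (c := w + 1) σm ha).symm
  have e3 : qlSigma σm (u + w) a =
      tmul (qlSigma σm u a) (1 : Matrix (Fin w → Fin N) (Fin w → Fin N) K) :=
    (sigma_tmul_one σm ha).symm
  rw [e1, e2, e3, tmul_mul, tmul_mul]
  simp only [Matrix.one_mul, Matrix.mul_one]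

lemma CS_far {t c a : ℕ} (h1 : a + 1 < c) (h2 : c < t) :
    qlC Cc t c * qlSigma σm (t + 1) a = qlSigma σm t a * qlC Cc t c := by
  obtain ⟨f, rfl⟩ : ∃ f, c = (a + 2) + f := ⟨c - (a + 2), by omega⟩
  obtain ⟨w, rfl⟩ : ∃ w, t = (a + 2) + w := ⟨t - (a + 2), by omega⟩
  exact C_hi_sigma_low σm Cc (a + 2) w f a (by omega) (by omega)

lemma S_hi_sigma_low (u w f a : ℕ) (ha : a + 1 < u) (hf : f + 1 < w) :
    qlSigma σm (u + w) (u + f) * qlSigma σm (u + w) a =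
      qlSigma σm (u + w) a * qlSigma σm (u + w) (u + f) := by
  have e1 : qlSigma σm (u + w) (u + f) =
      tmul (1 : Matrix (Fin u → Fin N) (Fin u → Fin N) K) (qlSigma σm w f) :=
    (tmul_one_sigma σm hf).symm
  have e2 : qlSigma σm (u + w) a =
      tmul (qlSigma σm u a) (1 : Matrix (Fin w → Fin N) (Fin w → Fin N) K) :=
    (sigma_tmul_one σm ha).symm
  rw [e1, e2, tmul_mul, tmul_mul]
  simp only [Matrix.one_mul, Matrix.mul_one]

lemma SS_far {t b a : ℕ} (h1 : a + 1 < b) (h2 : b + 1 < t) :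
    qlSigma σm t b * qlSigma σm t a = qlSigma σm t a * qlSigma σm t b := by
  obtain ⟨f, rfl⟩ : ∃ f, b = (a + 2) + f := ⟨b - (a + 2), by omega⟩
  obtain ⟨w, rfl⟩ : ∃ w, t = (a + 2) + w := ⟨t - (a + 2), by omega⟩
  exact S_hi_sigma_low σm (a + 2) w f a (by omega) (by omega)

lemma extExt_sigma {u v : ℕ} (M : Matrix (Fin u → Fin N) (Fin v → Fin N) K) :
    qlExt (qlExt M) * qlSigma σm (v + 2) v = qlSigma σm (u + 2) u * qlExt (qlExt M) := by
  have hM : qlExt (qlExt M) = tmul M (1 : Matrix (Fin 2 → Fin N) (Fin 2 → Fin N) K) := by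
    rw [qlExt_eq_tmul, qlExt_eq_tmul, tmul_tmul_one]
  have hSv : qlSigma σm (v + 2) v =
      tmul (1 : Matrix (Fin v → Fin N) (Fin v → Fin N) K) (qlSigma σm 2 0) := by
    simpa using (tmul_one_sigma (p := v) σm (show 0 + 1 < 2 by norm_num)).symm
  have hSu : qlSigma σm (u + 2) u =
      tmul (1 : Matrix (Fin u → Fin N) (Fin u → Fin N) K) (qlSigma σm 2 0) := by
    simpa using (tmul_one_sigma (p := u) σm (show 0 + 1 < 2 by norm_num)).symm
  rw [hM, hSv, hSu, tmul_mul, tmul_mul]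
  simp only [Matrix.one_mul, Matrix.mul_one]

lemma lift_braid
    (hbraid : qlSigma σm 3 0 * qlSigma σm 3 1 * qlSigma σm 3 0 =
      qlSigma σm 3 1 * qlSigma σm 3 0 * qlSigma σm 3 1) (p : ℕ) :
    qlSigma σm (p + 3) p * qlSigma σm (p + 3) (p + 1) * qlSigma σm (p + 3) p =
      qlSigma σm (p + 3) (p + 1) * qlSigma σm (p + 3) p * qlSigma σm (p + 3) (p + 1) := by
  have h := congrArg (tmul (1 : Matrix (Fin p → Fin N) (Fin p → Fin N) K)) hbraid
  simp only [tmul_one_mul] at h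
  simp only [tmul_one_sigma σm (show 0 + 1 < 3 by norm_num),
    tmul_one_sigma σm (show 1 + 1 < 3 by norm_num)] at h
  simpa using h

lemma lift_rel4
    (hrel4 : qlSigma σm 2 0 * (qlC Cc 2 0 * qlSigma σm 3 1 + qlC Cc 2 1) =
      (qlC Cc 2 0 * qlSigma σm 3 1 + qlC Cc 2 1) * qlSigma σm 3 0) (p : ℕ) :
    qlSigma σm (p + 2) p *
        (qlC Cc (p + 2) p * qlSigma σm (p + 3) (p + 1) + qlC Cc (p + 2) (p + 1)) =
      (qlC Cc (p + 2) p * qlSigma σm (p + 3) (p + 1) + qlC Cc (p + 2) (p + 1)) *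
        qlSigma σm (p + 3) p := by
  have h := congrArg (tmul (1 : Matrix (Fin p → Fin N) (Fin p → Fin N) K)) hrel4
  simp only [tmul_one_mul, tmul_add] at h
  simp only [tmul_one_sigma σm (show 0 + 1 < 2 by norm_num),
    tmul_one_sigma σm (show 1 + 1 < 3 by norm_num),
    tmul_one_sigma σm (show 0 + 1 < 3 by norm_num),
    tmul_one_C Cc (show 0 < 2 by norm_num),
    tmul_one_C Cc (show 1 < 2 by norm_num)] at h
  simpa using h

lemma part2 (k : ℕ) :
    qlZ σm Cc k = ∑ s ∈ Finset.range (k + 1), qlC Cc (k + 1) s *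
      ((List.range (k - s)).map (fun i => qlSigma σm (k + 2) (s + 1 + i))).prod := by
  induction k with
  | zero => simp [qlZ]
  | succ k ih =>
    have hE : qlExt (qlZ σm Cc k) = ∑ s ∈ Finset.range (k + 1), qlC Cc (k + 2) s *
        ((List.range (k - s)).map (fun i => qlSigma σm (k + 3) (s + 1 + i))).prod := by
      rw [ih, qlExt_sum]
      refine Finset.sum_congr rfl fun s hs => ?_
      have hs' : s < k + 1 := Finset.mem_range.mp hs
      rw [qlExt_mul, qlExt_qlC Cc (by omega), qlExt_listProd, List.map_map]
      congr 1
      refine congrArg _ (List.map_congr_left fun i hi => ?_)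
      have hi' : i < k - s := List.mem_range.mp hi
      exact qlExt_qlSigma σm (by omega)
    show qlC Cc (k + 2) (k + 1) + qlExt (qlZ σm Cc k) * qlSigma σm (k + 3) (k + 1) =
      ∑ s ∈ Finset.range (k + 2), qlC Cc (k + 2) s *
        ((List.range (k + 1 - s)).map (fun i => qlSigma σm (k + 3) (s + 1 + i))).prod
    rw [hE, Matrix.sum_mul, Finset.sum_range_succ _ (k + 1), Nat.sub_self]
    simp only [List.range_zero, List.map_nil, List.prod_nil, Matrix.mul_one]
    rw [add_comm (qlC Cc (k + 2) (k + 1))]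
    congr 1
    refine Finset.sum_congr rfl fun s hs => ?_
    have hs' : s < k + 1 := Finset.mem_range.mp hs
    rw [Matrix.mul_assoc]
    congr 1
    have h1 : k + 1 - s = (k - s) + 1 := by omega
    rw [h1, List.range_succ, List.map_append, List.prod_append]
    have h2 : s + 1 + (k - s) = k + 1 := by omega
    simp [h2]

lemma part1
    (hbraid : qlSigma σm 3 0 * qlSigma σm 3 1 * qlSigma σm 3 0 =
      qlSigma σm 3 1 * qlSigma σm 3 0 * qlSigma σm 3 1)
    (hrel4 : qlSigma σm 2 0 * (qlC Cc 2 0 * qlSigma σm 3 1 + qlC Cc 2 1) =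
      (qlC Cc 2 0 * qlSigma σm 3 1 + qlC Cc 2 1) * qlSigma σm 3 0) :
    ∀ k m : ℕ, 1 ≤ m → m ≤ k →
      qlZ σm Cc k * qlSigma σm (k + 2) (m - 1) =
        qlSigma σm (k + 1) (m - 1) * qlZ σm Cc k := by
  intro k
  induction k with
  | zero => intro m h1 h2; omega
  | succ j ih =>
    intro m hm1 hmk
    obtain ⟨a, rfl⟩ : ∃ a, m = a + 1 := ⟨m - 1, by omega⟩
    simp only [Nat.add_sub_cancel]
    show (qlC Cc (j + 2) (j + 1) + qlExt (qlZ σm Cc j) * qlSigma σm (j + 3) (j + 1)) *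
        qlSigma σm (j + 3) a =
      qlSigma σm (j + 2) a *
        (qlC Cc (j + 2) (j + 1) + qlExt (qlZ σm Cc j) * qlSigma σm (j + 3) (j + 1))
    by_cases hcase : a + 1 ≤ j
    · -- far case
      have t1 : qlC Cc (j + 2) (j + 1) * qlSigma σm (j + 3) a =
          qlSigma σm (j + 2) a * qlC Cc (j + 2) (j + 1) :=
        CS_far σm Cc (by omega) (by omega)
      have t2 : qlSigma σm (j + 3) (j + 1) * qlSigma σm (j + 3) a =
          qlSigma σm (j + 3) a * qlSigma σm (j + 3) (j + 1) :=
        SS_far σm (by omega) (by omega)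
      have hrec := ih (a + 1) (by omega) (by omega)
      simp only [Nat.add_sub_cancel] at hrec
      have t3 : qlExt (qlZ σm Cc j) * qlSigma σm (j + 3) a =
          qlSigma σm (j + 2) a * qlExt (qlZ σm Cc j) := by
        calc qlExt (qlZ σm Cc j) * qlSigma σm (j + 3) a
            = qlExt (qlZ σm Cc j) * qlExt (qlSigma σm (j + 2) a) := by
              rw [qlExt_qlSigma σm (by omega)]
          _ = qlExt (qlZ σm Cc j * qlSigma σm (j + 2) a) := (qlExt_mul _ _).symm
          _ = qlExt (qlSigma σm (j + 1) a * qlZ σm Cc j) := by rw [hrec]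
          _ = qlExt (qlSigma σm (j + 1) a) * qlExt (qlZ σm Cc j) := qlExt_mul _ _
          _ = qlSigma σm (j + 2) a * qlExt (qlZ σm Cc j) := by
              rw [qlExt_qlSigma σm (by omega)]
      calc (qlC Cc (j + 2) (j + 1) + qlExt (qlZ σm Cc j) * qlSigma σm (j + 3) (j + 1)) *
            qlSigma σm (j + 3) a
          = qlC Cc (j + 2) (j + 1) * qlSigma σm (j + 3) a +
              qlExt (qlZ σm Cc j) * qlSigma σm (j + 3) (j + 1) * qlSigma σm (j + 3) a :=
            Matrix.add_mul _ _ _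
        _ = qlSigma σm (j + 2) a * qlC Cc (j + 2) (j + 1) +
              qlExt (qlZ σm Cc j) * (qlSigma σm (j + 3) (j + 1) * qlSigma σm (j + 3) a) := by
            rw [t1, Matrix.mul_assoc]
        _ = qlSigma σm (j + 2) a * qlC Cc (j + 2) (j + 1) +
              qlExt (qlZ σm Cc j) * qlSigma σm (j + 3) a * qlSigma σm (j + 3) (j + 1) := by
            rw [t2, Matrix.mul_assoc]
        _ = qlSigma σm (j + 2) a * qlC Cc (j + 2) (j + 1) +
              qlSigma σm (j + 2) a * (qlExt (qlZ σm Cc j) * qlSigma σm (j + 3) (j + 1)) := by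
            rw [t3, Matrix.mul_assoc]
        _ = qlSigma σm (j + 2) a *
              (qlC Cc (j + 2) (j + 1) + qlExt (qlZ σm Cc j) * qlSigma σm (j + 3) (j + 1)) :=
            (Matrix.mul_add _ _ _).symm
    · -- adjacent case: a = j
      have haj : a = j := by omega
      subst haj
      rcases a with _ | i
      · -- base
        have hE : qlExt (qlZ σm Cc 0) = qlC Cc 2 0 := qlExt_qlC Cc (by norm_num)
        rw [hE]
        have hswap : qlC Cc 2 1 + qlC Cc 2 0 * qlSigma σm 3 1 =
            qlC Cc 2 0 * qlSigma σm 3 1 + qlC Cc 2 1 := add_comm _ _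
        calc (qlC Cc 2 1 + qlC Cc 2 0 * qlSigma σm 3 1) * qlSigma σm 3 0
            = (qlC Cc 2 0 * qlSigma σm 3 1 + qlC Cc 2 1) * qlSigma σm 3 0 :=
              congrArg (fun X => X * qlSigma σm 3 0) hswap
          _ = qlSigma σm 2 0 * (qlC Cc 2 0 * qlSigma σm 3 1 + qlC Cc 2 1) := hrel4.symm
          _ = qlSigma σm 2 0 * (qlC Cc 2 1 + qlC Cc 2 0 * qlSigma σm 3 1) :=
              congrArg (fun X => qlSigma σm 2 0 * X) hswap.symm
      · -- adjacent, k = i+2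
        have hZj : qlExt (qlZ σm Cc (i + 1)) =
            qlC Cc (i + 3) (i + 1) +
              qlExt (qlExt (qlZ σm Cc i)) * qlSigma σm (i + 4) (i + 1) := by
          calc qlExt (qlZ σm Cc (i + 1))
              = qlExt (qlC Cc (i + 2) (i + 1) +
                  qlExt (qlZ σm Cc i) * qlSigma σm (i + 3) (i + 1)) := rfl
            _ = qlExt (qlC Cc (i + 2) (i + 1)) +
                  qlExt (qlExt (qlZ σm Cc i) * qlSigma σm (i + 3) (i + 1)) := qlExt_add _ _
            _ = qlC Cc (i + 3) (i + 1) +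
                  qlExt (qlExt (qlZ σm Cc i)) * qlExt (qlSigma σm (i + 3) (i + 1)) := by
                rw [qlExt_qlC Cc (by omega), qlExt_mul]
            _ = qlC Cc (i + 3) (i + 1) +
                  qlExt (qlExt (qlZ σm Cc i)) * qlSigma σm (i + 4) (i + 1) := by
                rw [qlExt_qlSigma σm (by omega)]
        rw [hZj]
        set C2 := qlC Cc (i + 3) (i + 2) with hC2
        set C1 := qlC Cc (i + 3) (i + 1) with hC1
        set S2 := qlSigma σm (i + 4) (i + 2) with hS2
        set S1 := qlSigma σm (i + 4) (i + 1) with hS1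
        set T1 := qlSigma σm (i + 3) (i + 1) with hT1
        set D := qlExt (qlExt (qlZ σm Cc i)) with hD
        have hb : S1 * (S2 * S1) = S2 * (S1 * S2) := by
          rw [← mul_assoc, ← mul_assoc]
          exact lift_braid σm hbraid (i + 1)
        have hcorner : D * S2 = T1 * D := extExt_sigma σm (qlZ σm Cc i)
        have h4 : T1 * (C1 * S2 + C2) = (C1 * S2 + C2) * S1 :=
          lift_rel4 σm Cc hrel4 (i + 1)
        have hcomb : C2 * S1 + C1 * S2 * S1 = (C1 * S2 + C2) * S1 := by
          rw [Matrix.add_mul]; exact add_comm _ _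
        have hR : T1 * (C2 + (C1 + D * S1) * S2) =
            T1 * C2 + T1 * (C1 * S2) + T1 * (D * (S1 * S2)) := by
          rw [Matrix.mul_add T1 C2 ((C1 + D * S1) * S2), Matrix.add_mul C1 (D * S1) S2,
            Matrix.mul_assoc D S1 S2, Matrix.mul_add T1 (C1 * S2) (D * (S1 * S2)),
            ← add_assoc]
        rw [hR]
        calc (C2 + (C1 + D * S1) * S2) * S1
            = C2 * S1 + (C1 + D * S1) * S2 * S1 := Matrix.add_mul _ _ _
          _ = C2 * S1 + (C1 * S2 + D * (S1 * S2)) * S1 := by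
              rw [Matrix.add_mul C1 (D * S1) S2, Matrix.mul_assoc D S1 S2]
          _ = C2 * S1 + C1 * S2 * S1 + D * (S1 * S2) * S1 := by
              rw [Matrix.add_mul (C1 * S2) (D * (S1 * S2)) S1, ← add_assoc]
          _ = (C1 * S2 + C2) * S1 + D * (S1 * (S2 * S1)) := by
              rw [hcomb, Matrix.mul_assoc D (S1 * S2) S1, Matrix.mul_assoc S1 S2 S1]
          _ = T1 * (C1 * S2 + C2) + D * (S2 * (S1 * S2)) := by rw [← h4, hb]
          _ = T1 * (C1 * S2 + C2) + D * S2 * (S1 * S2) := by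
              rw [← Matrix.mul_assoc D S2 (S1 * S2)]
          _ = T1 * (C1 * S2 + C2) + T1 * (D * (S1 * S2)) := by
              rw [hcorner, Matrix.mul_assoc T1 D (S1 * S2)]
          _ = T1 * C2 + T1 * (C1 * S2) + T1 * (D * (S1 * S2)) := by
              rw [Matrix.mul_add T1 (C1 * S2) C2, add_comm (T1 * (C1 * S2)) (T1 * C2)]

end Structural

end QLAux

/-- For a quantum Lie algebra (structure tensors `σ`, `C` satisfying the braid relation,
the quantum Jacobi identity, `C₁δ₃σ₁ = σ₂σ₁C₂` and `(σ₂C₁δ₃+C₂)σ₁ = σ₁(σ₂C₁δ₃+C₂)`;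
operator words are read left to right, so a word `X Y` has matrix `Mat(Y) * Mat(X)`),
the elements `Z_r` defined by `Z_2 = C_1`, `Z_{r+1} = C_r + σ_r Z_r δ_{r+1}` satisfy
`σ_m Z_r = Z_r σ_m` for `1 ≤ m ≤ r-2` and have the explicit form
`Z_{r+1} = C_r + σ_r C_{r-1} δ_{r+1} + σ_r σ_{r-1} C_{r-2} δ_r δ_{r+1} + ⋯ +
σ_r σ_{r-1} ⋯ σ_2 C_1 δ_3 ⋯ δ_{r+1}`
(in the sum below, `s` is the 0-based position of the `C` factor, `Z_{k+2} = qlZ k`,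
and 1-based `σ_j` corresponds to `qlSigma _ _ (j-1)`). -/
theorem quantumLie_Z_properties {K : Type*} [CommRing K] {N : ℕ}
    (σm : Matrix (Fin N × Fin N) (Fin N × Fin N) K)
    (Cc : Fin N → Fin N → Fin N → K)
    (hbraid : qlSigma σm 3 0 * qlSigma σm 3 1 * qlSigma σm 3 0 =
      qlSigma σm 3 1 * qlSigma σm 3 0 * qlSigma σm 3 1)
    (hjacobi : qlC Cc 1 0 * qlC Cc 2 0 =
      qlC Cc 1 0 * qlC Cc 2 0 * qlSigma σm 3 1 + qlC Cc 1 0 * qlC Cc 2 1)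
    (hrel3 : qlSigma σm 2 0 * qlC Cc 2 0 =
      qlC Cc 2 1 * qlSigma σm 3 0 * qlSigma σm 3 1)
    (hrel4 : qlSigma σm 2 0 * (qlC Cc 2 0 * qlSigma σm 3 1 + qlC Cc 2 1) =
      (qlC Cc 2 0 * qlSigma σm 3 1 + qlC Cc 2 1) * qlSigma σm 3 0) :
    (∀ k m : ℕ, 1 ≤ m → m ≤ k →
      qlZ σm Cc k * qlSigma σm (k + 2) (m - 1) =
        qlSigma σm (k + 1) (m - 1) * qlZ σm Cc k) ∧
    (∀ k : ℕ, qlZ σm Cc k =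
      ∑ s ∈ Finset.range (k + 1), qlC Cc (k + 1) s *
        ((List.range (k - s)).map (fun i => qlSigma σm (k + 2) (s + 1 + i))).prod) :=
  ⟨QLAux.part1 σm Cc hbraid hrel4, QLAux.part2 σm Cc⟩
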